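/- arXiv:1605.09491 — 5 statements merged into one kernel-verified Lean document; each statement's English description precedes it below -/
import Mathlib

section
/- If k : [0,∞) → ℝ is continuous and nonnegative, δ ∈ (0, 1/2), the function t ↦ k(t)·t^(1+δ) is monotone increasing on [T,∞) for some T > 0, and t·k(t) → 0 as t → ∞, then t^{-1}·∫₀^t k(s)²·s² ds → 0 as t → ∞. -/
open Real MeasureTheory Filter Set intervalIntegral

theorem stmt0 (k : ℝ → ℝ) (δ T : ℝ)
    (hkc : ContinuousOn k (Set.Ici 0))
    (hknn : ∀ t ∈ Set.Ici (0:ℝ), 0 ≤ k t)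
    (hδ0 : 0 < δ) (hδ1 : δ < 1/2) (hT : 0 < T)
    (hmono : MonotoneOn (fun t => k t * t ^ (1 + δ)) (Set.Ici T))
    (hdecay : Tendsto (fun t => t * k t) atTop (nhds 0)) :
    Tendsto (fun t => t⁻¹ * ∫ s in (0:ℝ)..t, k s ^ 2 * s ^ 2) atTop (nhds 0) := by
  have h2δ : (0:ℝ) < 1 - 2*δ := by linarith
  set C := ∫ s in (0:ℝ)..T, k s ^ 2 * s ^ 2 with hCdef
  have hcont2 : ContinuousOn (fun s => k s ^ 2 * s ^ 2) (Set.Ici 0) :=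
    (hkc.pow 2).mul ((continuous_pow 2).continuousOn)
  have hintable : ∀ a b : ℝ, 0 ≤ a → a ≤ b →
      IntervalIntegrable (fun s => k s ^ 2 * s ^ 2) volume a b := by
    intro a b ha hab
    apply ContinuousOn.intervalIntegrable
    apply hcont2.mono
    rw [Set.uIcc_of_le hab]
    intro x hx
    exact le_trans ha hx.1
  have hg : Tendsto (fun t => t⁻¹ * C + (t * k t)^2 / (1 - 2*δ)) atTop (nhds 0) := by
    have h1 : Tendsto (fun t : ℝ => t⁻¹ * C) atTop (nhds 0) := by
      simpa using tendsto_inv_atTop_zero.mul_const C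
    have h2 : Tendsto (fun t => (t * k t)^2 / (1 - 2*δ)) atTop (nhds 0) := by
      have := (hdecay.pow 2).div_const (1 - 2*δ)
      simpa using this
    simpa using h1.add h2
  apply tendsto_of_tendsto_of_tendsto_of_le_of_le' tendsto_const_nhds hg
  · filter_upwards [eventually_ge_atTop (max T 1)] with t ht
    have ht0 : (0:ℝ) < t := lt_of_lt_of_le one_pos (le_trans (le_max_right T 1) ht)
    have : 0 ≤ ∫ s in (0:ℝ)..t, k s ^ 2 * s ^ 2 := by
      apply intervalIntegral.integral_nonneg ht0.le
      intro s hs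
      positivity
    positivity
  · filter_upwards [eventually_ge_atTop (max T 1)] with t ht
    have ht0 : (0:ℝ) < t := lt_of_lt_of_le one_pos (le_trans (le_max_right T 1) ht)
    have hTt : T ≤ t := le_trans (le_max_left T 1) ht
    have hint1 : IntervalIntegrable (fun s => k s ^ 2 * s ^ 2) volume 0 T :=
      hintable 0 T le_rfl hT.le
    have hint2 : IntervalIntegrable (fun s => k s ^ 2 * s ^ 2) volume T t :=
      hintable T t hT.le hTt
    have hint3 : IntervalIntegrable (fun s : ℝ => k t ^ 2 * t ^ (2 + 2*δ) * s ^ (-(2*δ)))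
        volume T t :=
      (intervalIntegral.intervalIntegrable_rpow' (by linarith)).const_mul _
    have hsplit : (∫ s in (0:ℝ)..t, k s ^ 2 * s ^ 2)
        = C + ∫ s in T..t, k s ^ 2 * s ^ 2 := by
      rw [hCdef, intervalIntegral.integral_add_adjacent_intervals hint1 hint2]
    have hptwise : ∀ s ∈ Set.Icc T t,
        k s ^ 2 * s ^ 2 ≤ k t ^ 2 * t ^ (2 + 2*δ) * s ^ (-(2*δ)) := by
      intro s hs
      have hs0 : (0:ℝ) < s := lt_of_lt_of_le hT hs.1
      have hmle : k s * s ^ (1 + δ) ≤ k t * t ^ (1 + δ) :=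
        hmono hs.1 hTt hs.2
      have hnn : 0 ≤ k s * s ^ (1 + δ) :=
        mul_nonneg (hknn s hs0.le) (Real.rpow_nonneg hs0.le _)
      have hsq : (k s * s ^ (1 + δ))^2 ≤ (k t * t ^ (1 + δ))^2 :=
        pow_le_pow_left₀ hnn hmle 2
      have keyS : (s ^ (1 + δ))^2 * s ^ (-(2*δ)) = s ^ 2 := by
        rw [← Real.rpow_natCast (s ^ (1 + δ)) 2, ← Real.rpow_mul hs0.le,
          ← Real.rpow_add hs0,
          show ((1 + δ) * ((2:ℕ):ℝ) + -(2*δ)) = ((2:ℕ):ℝ) by push_cast; ring,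
          Real.rpow_natCast]
      have keyT : (t ^ (1 + δ))^2 = t ^ (2 + 2*δ) := by
        rw [← Real.rpow_natCast (t ^ (1 + δ)) 2, ← Real.rpow_mul ht0.le]
        norm_num
        ring_nf
      calc k s ^ 2 * s ^ 2 = (k s * s ^ (1 + δ))^2 * s ^ (-(2*δ)) := by
            rw [mul_pow, mul_assoc, keyS]
        _ ≤ (k t * t ^ (1 + δ))^2 * s ^ (-(2*δ)) :=
            mul_le_mul_of_nonneg_right hsq (Real.rpow_nonneg hs0.le _)
        _ = k t ^ 2 * t ^ (2 + 2*δ) * s ^ (-(2*δ)) := by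
            rw [mul_pow, keyT]
    have hbound : (∫ s in T..t, k s ^ 2 * s ^ 2)
        ≤ k t ^ 2 * t ^ (2 + 2*δ) * (t ^ (1 - 2*δ) / (1 - 2*δ)) := by
      have h1 : (∫ s in T..t, k s ^ 2 * s ^ 2)
          ≤ ∫ s in T..t, k t ^ 2 * t ^ (2 + 2*δ) * s ^ (-(2*δ)) :=
        intervalIntegral.integral_mono_on hTt hint2 hint3 hptwise
      have h2 : (∫ s in T..t, (s:ℝ) ^ (-(2*δ)))
          = (t ^ (-(2*δ)+1) - T ^ (-(2*δ)+1)) / (-(2*δ)+1) :=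
        integral_rpow (Or.inl (by linarith))
      have h3 : (∫ s in T..t, k t ^ 2 * t ^ (2 + 2*δ) * s ^ (-(2*δ)))
          = k t ^ 2 * t ^ (2 + 2*δ) * ((t ^ (-(2*δ)+1) - T ^ (-(2*δ)+1)) / (-(2*δ)+1)) := by
        rw [intervalIntegral.integral_const_mul, h2]
      have h4 : (t ^ (-(2*δ)+1) - T ^ (-(2*δ)+1)) / (-(2*δ)+1)
          ≤ t ^ (1 - 2*δ) / (1 - 2*δ) := by
        rw [show (-(2*δ)+1) = 1 - 2*δ by ring]
        have hTnn : 0 ≤ T ^ (1 - 2*δ) := Real.rpow_nonneg hT.le _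
        gcongr
        linarith
      calc (∫ s in T..t, k s ^ 2 * s ^ 2)
          ≤ k t ^ 2 * t ^ (2 + 2*δ) * ((t ^ (-(2*δ)+1) - T ^ (-(2*δ)+1)) / (-(2*δ)+1)) := by
            rw [← h3]; exact h1
        _ ≤ k t ^ 2 * t ^ (2 + 2*δ) * (t ^ (1 - 2*δ) / (1 - 2*δ)) := by
            apply mul_le_mul_of_nonneg_left h4
            positivity
    have htpow : t ^ (2 + 2*δ) * t ^ (1 - 2*δ) = t^3 := by
      rw [← Real.rpow_add ht0, show (2 + 2*δ + (1 - 2*δ)) = ((3:ℕ):ℝ) by push_cast; ring,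
        Real.rpow_natCast]
    calc t⁻¹ * ∫ s in (0:ℝ)..t, k s ^ 2 * s ^ 2
        = t⁻¹ * C + t⁻¹ * ∫ s in T..t, k s ^ 2 * s ^ 2 := by
          rw [hsplit]; ring
      _ ≤ t⁻¹ * C + t⁻¹ * (k t ^ 2 * t ^ (2 + 2*δ) * (t ^ (1 - 2*δ) / (1 - 2*δ))) := by
          apply add_le_add le_rfl
          exact mul_le_mul_of_nonneg_left hbound (inv_nonneg.mpr ht0.le)
      _ = t⁻¹ * C + (t * k t)^2 / (1 - 2*δ) := by
          have : t⁻¹ * (k t ^ 2 * t ^ (2 + 2*δ) * (t ^ (1 - 2*δ) / (1 - 2*δ)))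
              = (t * k t)^2 / (1 - 2*δ) := by
            rw [show k t ^ 2 * t ^ (2 + 2*δ) * (t ^ (1 - 2*δ) / (1 - 2*δ))
                = k t ^ 2 * (t ^ (2 + 2*δ) * t ^ (1 - 2*δ)) / (1 - 2*δ) by ring, htpow]
            field_simp
          rw [this]
end

section
/- Let B : [0,∞) → ℝ be C² with B(0) = 1, B'(0) = 0, and B'' = k² B where k : [0,∞) → ℝ is continuous. Then for all t ≥ 0, ∫₀^t k(s)² ds ≤ B'(t) ≤ (∫₀^t k(s)² ds) · exp(∫₀^t s·k(s)² ds). -/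
open Real MeasureTheory Filter Set intervalIntegral Topology

lemma sys_nonneg (q E D E' : ℝ → ℝ)
    (hq : Continuous q) (hq0 : ∀ t, 0 ≤ q t)
    (hE : ∀ t ∈ Set.Ici (0:ℝ), HasDerivWithinAt E (E' t) (Set.Ici 0) t)
    (hD : ∀ t ∈ Set.Ici (0:ℝ), HasDerivWithinAt D (q t * E t) (Set.Ici 0) t)
    (hED : ∀ t ∈ Set.Ici (0:ℝ), D t ≤ E' t)
    (hE0 : 0 ≤ E 0) (hD0 : 0 ≤ D 0) :
    ∀ t ≥ (0:ℝ), 0 ≤ E t ∧ 0 ≤ D t := by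
  intro T hT
  have hEc : ContinuousOn E (Set.Ici 0) := fun x hx => (hE x hx).continuousWithinAt
  have hDc : ContinuousOn D (Set.Ici 0) := fun x hx => (hD x hx).continuousWithinAt
  have hIccIci : Set.Icc (0:ℝ) T ⊆ Set.Ici 0 := fun x hx => hx.1
  obtain ⟨M₀, hM₀⟩ := (isCompact_Icc : IsCompact (Set.Icc (0:ℝ) T)).exists_bound_of_continuousOn
    hq.continuousOn
  set M := max M₀ 0 with hMdef
  have hM : ∀ s ∈ Set.Icc (0:ℝ) T, q s ≤ M := fun s hs =>
    le_trans (le_trans (le_abs_self _) (by simpa using hM₀ s hs)) (le_max_left _ _)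
  have hM0 : (0:ℝ) ≤ M := le_max_right _ _
  set C := Real.sqrt (2*M) + 1 with hCdef
  have hsq : Real.sqrt (2*M) ^ 2 = 2 * M := Real.sq_sqrt (by linarith)
  have hsqnn : 0 ≤ Real.sqrt (2*M) := Real.sqrt_nonneg _
  set lam := C/2 with hlamdef
  have hCpos : 0 < C := by rw [hCdef]; linarith
  have hlampos : 0 < lam := by rw [hlamdef]; linarith
  have hlamC : lam < C := by rw [hlamdef]; linarith
  have hMlam : M < lam * C := by
    rw [hlamdef]
    nlinarith [hsq, hsqnn]
  have key : ∀ ε > (0:ℝ), ∀ s ∈ Set.Icc (0:ℝ) T,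
      -(ε * Real.exp (C*s)) < E s ∧ -(ε * (lam * Real.exp (C*s))) < D s := by
    intro ε hε
    by_contra hcon
    push_neg at hcon
    have hc1 : Continuous fun s : ℝ => ε * Real.exp (C*s) :=
      continuous_const.mul (Real.continuous_exp.comp (continuous_const.mul continuous_id))
    have hc2 : Continuous fun s : ℝ => ε * (lam * Real.exp (C*s)) :=
      continuous_const.mul (continuous_const.mul
        (Real.continuous_exp.comp (continuous_const.mul continuous_id)))
    set S : Set ℝ := {s ∈ Set.Icc (0:ℝ) T |
      E s ≤ -(ε * Real.exp (C*s)) ∨ D s ≤ -(ε * (lam * Real.exp (C*s)))} with hSdef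
    have hSne : S.Nonempty := by
      obtain ⟨s, hs, hor⟩ := hcon
      refine ⟨s, hs, ?_⟩
      by_cases h1 : -(ε * Real.exp (C*s)) < E s
      · exact Or.inr (hor h1)
      · exact Or.inl (not_lt.mp h1)
    have hScl : IsClosed S := by
      have h1 : ContinuousOn (fun s => E s + ε * Real.exp (C*s)) (Set.Icc (0:ℝ) T) :=
        (hEc.mono hIccIci).add hc1.continuousOn
      have h2 : ContinuousOn (fun s => D s + ε * (lam * Real.exp (C*s))) (Set.Icc (0:ℝ) T) :=
        (hDc.mono hIccIci).add hc2.continuousOn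
      have : S = (Set.Icc (0:ℝ) T ∩ (fun s => E s + ε * Real.exp (C*s)) ⁻¹' Set.Iic 0)
          ∪ (Set.Icc (0:ℝ) T ∩ (fun s => D s + ε * (lam * Real.exp (C*s))) ⁻¹' Set.Iic 0) := by
        ext x
        simp only [hSdef, Set.mem_setOf_eq, Set.mem_union, Set.mem_inter_iff, Set.mem_preimage,
          Set.mem_Iic]
        constructor
        · rintro ⟨hx, h | h⟩
          · exact Or.inl ⟨hx, by linarith⟩
          · exact Or.inr ⟨hx, by linarith⟩
        · rintro (⟨hx, h⟩ | ⟨hx, h⟩)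
          · exact ⟨hx, Or.inl (by linarith)⟩
          · exact ⟨hx, Or.inr (by linarith)⟩
      rw [this]
      exact (h1.preimage_isClosed_of_isClosed isClosed_Icc isClosed_Iic).union
        (h2.preimage_isClosed_of_isClosed isClosed_Icc isClosed_Iic)
    have hSbdd : BddBelow S := ⟨0, fun x hx => hx.1.1⟩
    set t₁ := sInf S with ht₁def
    have ht₁S : t₁ ∈ S := hScl.csInf_mem hSne hSbdd
    have ht₁Icc : t₁ ∈ Set.Icc (0:ℝ) T := ht₁S.1
    have ht₁pos : 0 < t₁ := by
      rcases lt_or_eq_of_le ht₁Icc.1 with h | h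
      · exact h
      · exfalso
        rcases ht₁S.2 with hc | hc <;> rw [← h] at hc <;>
          simp only [mul_zero, Real.exp_zero, mul_one] at hc <;> nlinarith [Real.exp_pos (0:ℝ)]
    have hbefore : ∀ s ∈ Set.Ico (0:ℝ) t₁,
        -(ε * Real.exp (C*s)) < E s ∧ -(ε * (lam * Real.exp (C*s))) < D s := by
      intro s hs
      have hsIcc : s ∈ Set.Icc (0:ℝ) T := ⟨hs.1, le_trans hs.2.le ht₁Icc.2⟩
      by_contra hcon2
      have hsS : s ∈ S := by
        refine ⟨hsIcc, ?_⟩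
        push_neg at hcon2
        by_cases h1 : -(ε * Real.exp (C*s)) < E s
        · exact Or.inr (hcon2 h1)
        · exact Or.inl (not_lt.mp h1)
      exact absurd (csInf_le hSbdd hsS) (not_le.mpr hs.2)
    -- limit filter
    have hne : (𝓝[Set.Ico (0:ℝ) t₁] t₁).NeBot := by
      rw [mem_closure_iff_nhdsWithin_neBot.symm]
      rw [closure_Ico (ne_of_lt ht₁pos)]
      exact Set.right_mem_Icc.mpr ht₁pos.le
    have hIcoIci : Set.Ico (0:ℝ) t₁ ⊆ Set.Ici 0 := fun x hx => hx.1
    have hElim : -(ε * Real.exp (C*t₁)) ≤ E t₁ := by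
      have htend : Tendsto (fun s => E s + ε * Real.exp (C*s)) (𝓝[Set.Ico (0:ℝ) t₁] t₁)
          (𝓝 (E t₁ + ε * Real.exp (C*t₁))) := by
        apply Filter.Tendsto.add
        · exact ((hEc t₁ ht₁pos.le).mono hIcoIci).tendsto
        · exact hc1.continuousAt.continuousWithinAt.tendsto
      have hev : ∀ᶠ s in 𝓝[Set.Ico (0:ℝ) t₁] t₁, (0:ℝ) ≤ E s + ε * Real.exp (C*s) := by
        filter_upwards [self_mem_nhdsWithin] with s hs
        linarith [(hbefore s hs).1]
      linarith [ge_of_tendsto htend hev]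
    have hDlim : -(ε * (lam * Real.exp (C*t₁))) ≤ D t₁ := by
      have htend : Tendsto (fun s => D s + ε * (lam * Real.exp (C*s))) (𝓝[Set.Ico (0:ℝ) t₁] t₁)
          (𝓝 (D t₁ + ε * (lam * Real.exp (C*t₁)))) := by
        apply Filter.Tendsto.add
        · exact ((hDc t₁ ht₁pos.le).mono hIcoIci).tendsto
        · exact hc2.continuousAt.continuousWithinAt.tendsto
      have hev : ∀ᶠ s in 𝓝[Set.Ico (0:ℝ) t₁] t₁, (0:ℝ) ≤ D s + ε * (lam * Real.exp (C*s)) := by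
        filter_upwards [self_mem_nhdsWithin] with s hs
        linarith [(hbefore s hs).2]
      linarith [ge_of_tendsto htend hev]
    -- slope filter
    have hfle : 𝓝[Set.Ico (0:ℝ) t₁] t₁ ≤ 𝓝[Set.Ici 0 \ {t₁}] t₁ :=
      nhdsWithin_mono _ (fun x hx => ⟨hx.1, by
        simp only [Set.mem_singleton_iff]
        exact ne_of_lt hx.2⟩)
    have hexp1 : HasDerivAt (fun s : ℝ => ε * Real.exp (C*s)) (ε * (Real.exp (C*t₁) * C)) t₁ := by
      have h1 : HasDerivAt (fun s : ℝ => C * s) C t₁ := by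
        simpa using (hasDerivAt_id t₁).const_mul C
      exact ((Real.hasDerivAt_exp (C*t₁)).comp t₁ h1).const_mul ε
    have hexp2 : HasDerivAt (fun s : ℝ => ε * (lam * Real.exp (C*s)))
        (ε * (lam * (Real.exp (C*t₁) * C))) t₁ := by
      have h1 : HasDerivAt (fun s : ℝ => C * s) C t₁ := by
        simpa using (hasDerivAt_id t₁).const_mul C
      exact (((Real.hasDerivAt_exp (C*t₁)).comp t₁ h1).const_mul lam).const_mul ε
    have hexppos := Real.exp_pos (C*t₁)
    rcases ht₁S.2 with hc | hc
    · -- E crossing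
      set d := E' t₁ + ε * (Real.exp (C*t₁) * C) with hddef
      have hφ : HasDerivWithinAt (fun s => E s + ε * Real.exp (C*s)) d (Set.Ici 0) t₁ :=
        (hE t₁ ht₁pos.le).add hexp1.hasDerivWithinAt
      have hdpos : 0 < d := by
        have h1 := hED t₁ ht₁pos.le
        have h2 := hDlim
        have h5 : 0 < ε * Real.exp (C*t₁) * (C - lam) :=
          mul_pos (mul_pos hε hexppos) (sub_pos.mpr hlamC)
        rw [hddef]
        nlinarith [h5]
      have hdle : d ≤ 0 := by
        have hsl := hasDerivWithinAt_iff_tendsto_slope.mp hφ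
        have hsl2 : Tendsto (slope (fun s => E s + ε * Real.exp (C*s)) t₁)
            (𝓝[Set.Ico (0:ℝ) t₁] t₁) (𝓝 d) := hsl.mono_left hfle
        refine le_of_tendsto hsl2 ?_
        filter_upwards [self_mem_nhdsWithin] with s hs
        rw [slope_def_field]
        apply div_nonpos_of_nonneg_of_nonpos
        · have := (hbefore s hs).1
          linarith
        · linarith [hs.2]
      linarith
    · -- D crossing
      set d := q t₁ * E t₁ + ε * (lam * (Real.exp (C*t₁) * C)) with hddef
      have hφ : HasDerivWithinAt (fun s => D s + ε * (lam * Real.exp (C*s))) d (Set.Ici 0) t₁ :=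
        (hD t₁ ht₁pos.le).add hexp2.hasDerivWithinAt
      have hdpos : 0 < d := by
        have hq1 : q t₁ ≤ M := hM t₁ ht₁Icc
        have hq2 : 0 ≤ q t₁ := hq0 t₁
        have h3 : q t₁ * E t₁ ≥ q t₁ * (-(ε * Real.exp (C*t₁))) :=
          mul_le_mul_of_nonneg_left hElim hq2
        have h4 : q t₁ * (-(ε * Real.exp (C*t₁))) ≥ M * (-(ε * Real.exp (C*t₁))) := by
          apply mul_le_mul_of_nonpos_right hq1
          nlinarith
        have h5 : 0 < ε * Real.exp (C*t₁) * (lam * C - M) :=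
          mul_pos (mul_pos hε hexppos) (sub_pos.mpr hMlam)
        rw [hddef]
        nlinarith [h5]
      have hdle : d ≤ 0 := by
        have hsl := hasDerivWithinAt_iff_tendsto_slope.mp hφ
        have hsl2 : Tendsto (slope (fun s => D s + ε * (lam * Real.exp (C*s))) t₁)
            (𝓝[Set.Ico (0:ℝ) t₁] t₁) (𝓝 d) := hsl.mono_left hfle
        refine le_of_tendsto hsl2 ?_
        filter_upwards [self_mem_nhdsWithin] with s hs
        rw [slope_def_field]
        apply div_nonpos_of_nonneg_of_nonpos
        · have := (hbefore s hs).2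
          linarith
        · linarith [hs.2]
      linarith
  constructor
  · by_contra hneg
    push_neg at hneg
    have hε : 0 < -(E T) / Real.exp (C*T) := div_pos (by linarith) (Real.exp_pos _)
    have h2 := (key _ hε T (Set.right_mem_Icc.mpr hT)).1
    have h3 : -(-(E T) / Real.exp (C*T) * Real.exp (C*T)) = E T := by
      field_simp
    rw [h3] at h2
    exact lt_irrefl _ h2
  · by_contra hneg
    push_neg at hneg
    have hε : 0 < -(D T) / (lam * Real.exp (C*T)) :=
      div_pos (by linarith) (by positivity)
    have h2 := (key _ hε T (Set.right_mem_Icc.mpr hT)).2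
    have h3 : -(-(D T) / (lam * Real.exp (C*T)) * (lam * Real.exp (C*T))) = D T := by
      field_simp
    rw [h3] at h2
    exact lt_irrefl _ h2


def Kx (k : ℝ → ℝ) : ℝ → ℝ := fun s => k (max s 0)
def qx (k : ℝ → ℝ) : ℝ → ℝ := fun s => Kx k s ^ 2
noncomputable def Gx (k : ℝ → ℝ) : ℝ → ℝ := fun t => ∫ s in (0:ℝ)..t, qx k s
noncomputable def Hx (k : ℝ → ℝ) : ℝ → ℝ := fun t => ∫ s in (0:ℝ)..t, s * qx k s

theorem stmt2 (B B' k : ℝ → ℝ)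
    (hkc : ContinuousOn k (Set.Ici 0))
    (hB : ∀ t ∈ Set.Ici (0:ℝ), HasDerivWithinAt B (B' t) (Set.Ici 0) t)
    (hB' : ∀ t ∈ Set.Ici (0:ℝ), HasDerivWithinAt B' (k t ^ 2 * B t) (Set.Ici 0) t)
    (hB0 : B 0 = 1) (hB'0 : B' 0 = 0) :
    ∀ t ≥ (0:ℝ),
      (∫ s in (0:ℝ)..t, k s ^ 2) ≤ B' t ∧
      B' t ≤ (∫ s in (0:ℝ)..t, k s ^ 2) * Real.exp (∫ s in (0:ℝ)..t, s * k s ^ 2) := by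
  have hKc : Continuous (Kx k) :=
    hkc.comp_continuous (continuous_id.max continuous_const) (fun x => Set.mem_Ici.mpr (le_max_right _ _))
  have hKk : ∀ t ∈ Set.Ici (0:ℝ), Kx k t = k t := fun t ht => by
    simp only [Kx, max_eq_left (Set.mem_Ici.mp ht)]
  have hq : Continuous (qx k) := hKc.pow 2
  have hq0 : ∀ t, 0 ≤ qx k t := fun t => sq_nonneg _
  have hqk : ∀ t ∈ Set.Ici (0:ℝ), qx k t = k t ^ 2 := fun t ht => by
    simp only [qx, hKk t ht]
  have hq2 : Continuous (fun s => s * qx k s) := continuous_id.mul hq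
  have hG : ∀ t, HasDerivAt (Gx k) (qx k t) t := fun t =>
    intervalIntegral.integral_hasDerivAt_right (hq.intervalIntegrable 0 t)
      (hq.stronglyMeasurableAtFilter _ _) hq.continuousAt
  have hH : ∀ t, HasDerivAt (Hx k) (t * qx k t) t := fun t =>
    intervalIntegral.integral_hasDerivAt_right (hq2.intervalIntegrable 0 t)
      (hq2.stronglyMeasurableAtFilter _ _) hq2.continuousAt
  have hGnn : ∀ t ∈ Set.Ici (0:ℝ), 0 ≤ Gx k t := fun t ht =>
    intervalIntegral.integral_nonneg ht (fun s _ => hq0 s)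
  have hG0 : Gx k 0 = 0 := intervalIntegral.integral_same
  have hH0 : Hx k 0 = 0 := intervalIntegral.integral_same
  -- application 1 : B ≥ 0 and B' ≥ 0
  have app1 := sys_nonneg (qx k) B B' B' hq hq0 hB
    (fun t ht => by rw [hqk t ht]; exact hB' t ht)
    (fun t ht => le_refl _) (by rw [hB0]; exact zero_le_one) (by rw [hB'0])
  have hB'nn : ∀ t ∈ Set.Ici (0:ℝ), 0 ≤ B' t := fun t ht => (app1 t ht).2
  -- application 2 : B ≥ 1
  have app2 := sys_nonneg (fun _ => 0) (fun t => B t - 1) (fun _ => 0) B'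
    continuous_const (fun _ => le_refl 0)
    (fun t ht => (hB t ht).sub_const 1)
    (fun t ht => by simpa using hasDerivWithinAt_const t (Set.Ici (0:ℝ)) (0:ℝ))
    (fun t ht => hB'nn t ht) (by show (0:ℝ) ≤ B 0 - 1; rw [hB0]; norm_num) (le_refl 0)
  have hB1 : ∀ t ∈ Set.Ici (0:ℝ), 1 ≤ B t := fun t ht => by
    have h := (app2 t ht).1
    beta_reduce at h
    linarith
  -- application 3 : lower bound
  have app3 := sys_nonneg (fun _ => 0) (fun t => B' t - Gx k t) (fun _ => 0)
    (fun t => k t ^ 2 * B t - qx k t)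
    continuous_const (fun _ => le_refl 0)
    (fun t ht => (hB' t ht).sub (hG t).hasDerivWithinAt)
    (fun t ht => by simpa using hasDerivWithinAt_const t (Set.Ici (0:ℝ)) (0:ℝ))
    (fun t ht => by
      show (0:ℝ) ≤ k t ^ 2 * B t - qx k t
      rw [hqk t ht]
      nlinarith [hB1 t ht, sq_nonneg (k t)])
    (by show (0:ℝ) ≤ B' 0 - Gx k 0; rw [hB'0, hG0]; norm_num) (le_refl 0)
  -- application 4 : upper bound
  have hP : ∀ t, HasDerivAt (fun s => (1 + s * Gx k s) * Real.exp (Hx k s))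
      ((Gx k t + t * qx k t) * Real.exp (Hx k t)
        + (1 + t * Gx k t) * (Real.exp (Hx k t) * (t * qx k t))) t := by
    intro t
    have h1 : HasDerivAt (fun s => 1 + s * Gx k s) (Gx k t + t * qx k t) t := by
      have := ((hasDerivAt_id t).mul (hG t)).const_add 1
      simpa using this
    have h2 : HasDerivAt (fun s => Real.exp (Hx k s)) (Real.exp (Hx k t) * (t * qx k t)) t :=
      (Real.hasDerivAt_exp (Hx k t)).comp t (hH t)
    exact h1.mul h2
  have hGeH : ∀ t, HasDerivAt (fun s => Gx k s * Real.exp (Hx k s))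
      (qx k t * Real.exp (Hx k t) + Gx k t * (Real.exp (Hx k t) * (t * qx k t))) t := fun t =>
    (hG t).mul ((Real.hasDerivAt_exp (Hx k t)).comp t (hH t))
  have app4 := sys_nonneg (qx k)
    (fun t => (1 + t * Gx k t) * Real.exp (Hx k t) - B t)
    (fun t => Gx k t * Real.exp (Hx k t) - B' t)
    (fun t => (Gx k t + t * qx k t) * Real.exp (Hx k t)
        + (1 + t * Gx k t) * (Real.exp (Hx k t) * (t * qx k t)) - B' t)
    hq hq0
    (fun t ht => ((hP t).hasDerivWithinAt).sub (hB t ht))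
    (fun t ht => by
      have h := ((hGeH t).hasDerivWithinAt).sub (hB' t ht)
      have heq : qx k t * Real.exp (Hx k t) + Gx k t * (Real.exp (Hx k t) * (t * qx k t))
          - k t ^ 2 * B t
          = qx k t * ((1 + t * Gx k t) * Real.exp (Hx k t) - B t) := by
        rw [← hqk t ht]; ring
      exact heq ▸ h)
    (fun t ht => by
      show Gx k t * Real.exp (Hx k t) - B' t ≤ (Gx k t + t * qx k t) * Real.exp (Hx k t)
        + (1 + t * Gx k t) * (Real.exp (Hx k t) * (t * qx k t)) - B' t
      have h1 : 0 ≤ t * qx k t := mul_nonneg ht (hq0 t)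
      have h2 : 0 ≤ Gx k t := hGnn t ht
      have h3 : (0:ℝ) < Real.exp (Hx k t) := Real.exp_pos _
      have ht0 : (0:ℝ) ≤ t := ht
      nlinarith [mul_nonneg h1 h3.le, mul_nonneg (mul_nonneg h1 h2) h3.le,
        mul_nonneg ht0 h2])
    (by show (0:ℝ) ≤ (1 + 0 * Gx k 0) * Real.exp (Hx k 0) - B 0
        rw [hG0, hH0, hB0]; norm_num)
    (by show (0:ℝ) ≤ Gx k 0 * Real.exp (Hx k 0) - B' 0
        rw [hG0, hH0, hB'0]; norm_num)
  -- conclusion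
  intro t ht
  have hGk : (∫ s in (0:ℝ)..t, k s ^ 2) = Gx k t := by
    apply intervalIntegral.integral_congr
    intro s hs
    rw [Set.uIcc_of_le ht] at hs
    exact (hqk s hs.1).symm
  have hHk : (∫ s in (0:ℝ)..t, s * k s ^ 2) = Hx k t := by
    apply intervalIntegral.integral_congr
    intro s hs
    rw [Set.uIcc_of_le ht] at hs
    show s * k s ^ 2 = s * qx k s
    rw [hqk s hs.1]
  have h3 := (app3 t ht).1
  have h4 := (app4 t ht).2
  beta_reduce at h3 h4
  constructor
  · rw [hGk]
    linarith
  · rw [hGk, hHk]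
    linarith
end

section
/- Let B : [0,∞) → ℝ be C² with B(0) = 1, B'(0) = 0, B'' = k² B, where k is continuous, nonnegative, and satisfies ∫₀^∞ s·k(s)² ds < ∞ and ∫₀^∞ k(s)² ds > 0. Then there exist positive constants C₁, C₂ and T₀ such that C₁ t ≤ B(t) ≤ C₂ t for all t ≥ T₀. -/
open Real MeasureTheory Filter Set intervalIntegral
open scoped Topology

private lemma my_ftc (f f' : ℝ → ℝ)
    (hf : ∀ t ∈ Set.Ici (0:ℝ), HasDerivWithinAt f (f' t) (Set.Ici 0) t)
    (hf' : ContinuousOn f' (Set.Ici 0)) {a b : ℝ} (ha : 0 ≤ a) (hab : a ≤ b) :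
    ∫ x in a..b, f' x = f b - f a := by
  have hsub : Set.Icc a b ⊆ Set.Ici (0:ℝ) := fun x hx => ha.trans hx.1
  apply intervalIntegral.integral_eq_sub_of_hasDeriv_right_of_le hab
  · exact (show ContinuousOn f (Set.Ici 0) from fun t ht => (hf t ht).continuousWithinAt).mono hsub
  · intro x hx
    exact (hf x (ha.trans hx.1.le)).mono
      (fun y hy => ((ha.trans hx.1.le).trans (le_of_lt hy) : (0:ℝ) ≤ y))
  · exact (hf'.mono (by rw [Set.uIcc_of_le hab]; exact hsub)).intervalIntegrable

private lemma my_tail (f : ℝ → ℝ) (hfi : MeasureTheory.IntegrableOn f (Set.Ici 0))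
    (hnn : ∀ s ∈ Set.Ici (0:ℝ), 0 ≤ f s) {a b : ℝ} (ha : 0 ≤ a) (hab : a ≤ b) :
    ∫ x in a..b, f x ≤ ∫ x in Set.Ici (0:ℝ), f x := by
  rw [intervalIntegral.integral_of_le hab]
  apply MeasureTheory.setIntegral_mono_set hfi
  · exact (ae_restrict_iff' measurableSet_Ici).2 (MeasureTheory.ae_of_all _ hnn)
  · exact HasSubset.Subset.eventuallyLE (fun x hx => ha.trans hx.1.le)

theorem stmt3 (B B' k : ℝ → ℝ)
    (hkc : ContinuousOn k (Set.Ici 0))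
    (hknn : ∀ t ∈ Set.Ici (0:ℝ), 0 ≤ k t)
    (hB : ∀ t ∈ Set.Ici (0:ℝ), HasDerivWithinAt B (B' t) (Set.Ici 0) t)
    (hB' : ∀ t ∈ Set.Ici (0:ℝ), HasDerivWithinAt B' (k t ^ 2 * B t) (Set.Ici 0) t)
    (hB0 : B 0 = 1) (hB'0 : B' 0 = 0)
    (hint1 : MeasureTheory.IntegrableOn (fun s => s * k s ^ 2) (Set.Ici 0))
    (hint2 : MeasureTheory.IntegrableOn (fun s => k s ^ 2) (Set.Ici 0))
    (hpos : 0 < ∫ s in Set.Ici (0:ℝ), k s ^ 2) :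
    ∃ C₁ C₂ T₀ : ℝ, 0 < C₁ ∧ 0 < C₂ ∧ 0 < T₀ ∧
      ∀ t ≥ T₀, C₁ * t ≤ B t ∧ B t ≤ C₂ * t := by
  have hBcont : ContinuousOn B (Set.Ici 0) := fun t ht => (hB t ht).continuousWithinAt
  have hB'cont : ContinuousOn B' (Set.Ici 0) := fun t ht => (hB' t ht).continuousWithinAt
  have hkBcont : ContinuousOn (fun s => k s ^ 2 * B s) (Set.Ici 0) :=
    ((hkc.pow 2).mul hBcont)
  -- FTC for B and B'
  have ftcB : ∀ a b : ℝ, 0 ≤ a → a ≤ b → ∫ x in a..b, B' x = B b - B a :=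
    fun a b ha hab => my_ftc B B' hB hB'cont ha hab
  have ftcB' : ∀ a b : ℝ, 0 ≤ a → a ≤ b → ∫ x in a..b, k x ^ 2 * B x = B' b - B' a :=
    fun a b ha hab => my_ftc B' (fun s => k s ^ 2 * B s) hB' hkBcont ha hab
  -- positivity of B
  have hBpos : ∀ t : ℝ, 0 ≤ t → 0 < B t := by
    by_contra hcon
    push_neg at hcon
    obtain ⟨t₁, ht₁, hBt₁⟩ := hcon
    set U : Set ℝ := Set.Ici 0 ∩ B ⁻¹' (Set.Iic 0) with hU
    have hUc : IsClosed U := hBcont.preimage_isClosed_of_isClosed isClosed_Ici isClosed_Iic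
    have hUne : U.Nonempty := ⟨t₁, ht₁, hBt₁⟩
    have hUbdd : BddBelow U := ⟨0, fun x hx => hx.1⟩
    set c := sInf U with hc
    have hcU : c ∈ U := hUc.csInf_mem hUne hUbdd
    have hc0 : 0 ≤ c := hcU.1
    have hcne : c ≠ 0 := by
      intro h
      have : B c ≤ 0 := hcU.2
      rw [h, hB0] at this; linarith
    have hcpos : 0 < c := lt_of_le_of_ne hc0 (Ne.symm hcne)
    have hBpos' : ∀ t ∈ Set.Ico (0:ℝ) c, 0 < B t := by
      intro t ht
      by_contra h
      push_neg at h
      exact absurd (csInf_le hUbdd ⟨ht.1, h⟩) (not_le.2 ht.2)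
    have hB'nn : ∀ s ∈ Set.Ico (0:ℝ) c, 0 ≤ B' s := by
      intro s hs
      have := ftcB' 0 s le_rfl hs.1
      rw [hB'0, sub_zero] at this
      rw [← this]
      apply intervalIntegral.integral_nonneg hs.1
      intro u hu
      have hupos : 0 < B u ∨ 0 ≤ B u := Or.inr (hBpos' u ⟨hu.1, lt_of_le_of_lt hu.2 hs.2⟩).le
      have : 0 ≤ B u := (hBpos' u ⟨hu.1, lt_of_le_of_lt hu.2 hs.2⟩).le
      positivity
    have hBone : ∀ t ∈ Set.Ico (0:ℝ) c, 1 ≤ B t := by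
      intro t ht
      have := ftcB 0 t le_rfl ht.1
      rw [hB0] at this
      have hnn : 0 ≤ ∫ x in (0:ℝ)..t, B' x := by
        apply intervalIntegral.integral_nonneg ht.1
        exact fun u hu => hB'nn u ⟨hu.1, lt_of_le_of_lt hu.2 ht.2⟩
      linarith
    -- limit: B c ≥ 1
    have hmem : (𝓝[Set.Ico 0 c] c).NeBot := by
      apply mem_closure_iff_nhdsWithin_neBot.mp
      rw [closure_Ico hcne.symm]
      exact ⟨hc0, le_rfl⟩
    have htend : Filter.Tendsto B (𝓝[Set.Ico 0 c] c) (𝓝 (B c)) :=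
      ((hBcont c hc0).mono (fun x hx => hx.1)).tendsto
    have : 1 ≤ B c := by
      apply ge_of_tendsto htend
      exact eventually_mem_nhdsWithin.mono (fun x hx => hBone x hx)
    have : B c ≤ 0 := hcU.2
    linarith
  have hB'nn : ∀ t : ℝ, 0 ≤ t → 0 ≤ B' t := by
    intro t ht
    have := ftcB' 0 t le_rfl ht
    rw [hB'0, sub_zero] at this
    rw [← this]
    apply intervalIntegral.integral_nonneg ht
    intro u hu
    have := (hBpos u hu.1).le
    positivity
  have hBone : ∀ t : ℝ, 0 ≤ t → 1 ≤ B t := by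
    intro t ht
    have h := ftcB 0 t le_rfl ht
    rw [hB0] at h
    have hnn : 0 ≤ ∫ x in (0:ℝ)..t, B' x :=
      intervalIntegral.integral_nonneg ht (fun u hu => hB'nn u hu.1)
    linarith
  have hB'mono : ∀ a b : ℝ, 0 ≤ a → a ≤ b → B' a ≤ B' b := by
    intro a b ha hab
    have h := ftcB' a b ha hab
    have hnn : 0 ≤ ∫ x in a..b, k x ^ 2 * B x := by
      apply intervalIntegral.integral_nonneg hab
      intro u hu
      have := (hBpos u (ha.trans hu.1)).le
      positivity
    linarith
  -- choose T₁
  set I : ℝ := ∫ s in Set.Ici (0:ℝ), k s ^ 2 with hI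
  have htendI : Filter.Tendsto (fun b => ∫ x in (0:ℝ)..b, k x ^ 2) atTop (𝓝 I) := by
    have h1 : MeasureTheory.IntegrableOn (fun s => k s ^ 2) (Set.Ioi 0) :=
      hint2.mono_set Set.Ioi_subset_Ici_self
    have h2 := MeasureTheory.intervalIntegral_tendsto_integral_Ioi 0 h1 tendsto_id
    rwa [hI, MeasureTheory.integral_Ici_eq_integral_Ioi]
  -- interval integrability helper
  have hII : ∀ (g : ℝ → ℝ), ContinuousOn g (Set.Ici 0) → ∀ a b : ℝ, 0 ≤ a → a ≤ b →
      IntervalIntegrable g volume a b := by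
    intro g hg a b ha hab
    apply (hg.mono _).intervalIntegrable
    rw [Set.uIcc_of_le hab]
    exact fun x hx => ha.trans hx.1
  obtain ⟨T₁, hT₁, hT₁1⟩ :
      ∃ T₁ : ℝ, I / 2 < ∫ x in (0:ℝ)..T₁, k x ^ 2 ∧ 1 ≤ T₁ :=
    ((htendI.eventually (eventually_gt_nhds (half_lt_self hpos))).and
      (eventually_ge_atTop 1)).exists
  have hT₁0 : (0:ℝ) ≤ T₁ := by linarith
  have hB'lb : ∀ t, T₁ ≤ t → I / 2 ≤ B' t := by
    intro t ht
    have h1 : ∫ x in (0:ℝ)..T₁, k x ^ 2 ≤ B' T₁ := by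
      have h := ftcB' 0 T₁ le_rfl hT₁0
      rw [hB'0, sub_zero] at h
      rw [← h]
      apply intervalIntegral.integral_mono_on hT₁0
        (hII _ (hkc.pow 2) 0 T₁ le_rfl hT₁0) (hII _ hkBcont 0 T₁ le_rfl hT₁0)
      intro u hu
      have hBu := hBone u hu.1
      show k u ^ 2 ≤ k u ^ 2 * B u
      nlinarith [sq_nonneg (k u)]
    have := hB'mono T₁ t hT₁0 ht
    linarith
  have hgrow : ∀ t, T₁ ≤ t → 1 + I / 2 * (t - T₁) ≤ B t := by
    intro t ht
    have h := ftcB T₁ t hT₁0 ht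
    have h2 : I / 2 * (t - T₁) ≤ ∫ x in T₁..t, B' x := by
      have h3 := intervalIntegral.integral_mono_on ht
        (_root_.intervalIntegrable_const (c := I / 2)) (hII B' hB'cont T₁ t hT₁0 ht)
        (fun u hu => hB'lb u hu.1)
      rwa [intervalIntegral.integral_const, smul_eq_mul, mul_comm] at h3
    have hBT₁ := hBone T₁ hT₁0
    linarith
  -- upper bound setup
  set I₂ : ℝ := ∫ s in Set.Ici (0:ℝ), s * k s ^ 2 with hI₂
  have htendI₂ : Filter.Tendsto (fun b => ∫ x in (0:ℝ)..b, x * k x ^ 2) atTop (𝓝 I₂) := by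
    have h1 : MeasureTheory.IntegrableOn (fun s => s * k s ^ 2) (Set.Ioi 0) :=
      hint1.mono_set Set.Ioi_subset_Ici_self
    have h2 := MeasureTheory.intervalIntegral_tendsto_integral_Ioi 0 h1 tendsto_id
    rwa [hI₂, MeasureTheory.integral_Ici_eq_integral_Ioi]
  have hsknn : ∀ s ∈ Set.Ici (0:ℝ), 0 ≤ s * k s ^ 2 := by
    intro s hs
    have : (0:ℝ) ≤ s := hs
    positivity
  obtain ⟨T₂, hT₂, hT₂T₁⟩ :
      ∃ T₂ : ℝ, I₂ - 1/2 < ∫ x in (0:ℝ)..T₂, x * k x ^ 2 ∧ T₁ ≤ T₂ :=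
    ((htendI₂.eventually (eventually_gt_nhds (by linarith : I₂ - 1/2 < I₂))).and
      (eventually_ge_atTop T₁)).exists
  have hT₂0 : (0:ℝ) ≤ T₂ := hT₁0.trans hT₂T₁
  have hskcont : ContinuousOn (fun s => s * k s ^ 2) (Set.Ici 0) :=
    continuousOn_id.mul (hkc.pow 2)
  have htail : ∀ t, T₂ ≤ t → ∫ x in T₂..t, x * k x ^ 2 ≤ 1/2 := by
    intro t ht
    have hadd := intervalIntegral.integral_add_adjacent_intervals
      (hII _ hskcont 0 T₂ le_rfl hT₂0) (hII _ hskcont T₂ t hT₂0 ht)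
    have hfull : ∫ x in (0:ℝ)..t, x * k x ^ 2 ≤ I₂ :=
      my_tail _ hint1 hsknn le_rfl (hT₂0.trans ht)
    linarith
  have hA : ∀ t, T₂ ≤ t → ∫ x in T₂..t, k x ^ 2 ≤ I := by
    intro t ht
    exact my_tail _ hint2 (fun s _ => sq_nonneg (k s)) hT₂0 ht
  set M : ℝ := 2 * (B' T₂ + B T₂ * I) with hM
  have hMnn : 0 ≤ M := by
    have h1 := hB'nn T₂ hT₂0
    have h2 := hBone T₂ hT₂0
    nlinarith
  have hB'ub : ∀ t, T₂ ≤ t → B' t ≤ M := by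
    intro t ht
    have ht0 : (0:ℝ) ≤ t := hT₂0.trans ht
    have h := ftcB' T₂ t hT₂0 ht
    have hB't := hB'nn t ht0
    have hBT₂ := hBone T₂ hT₂0
    have hrhsint : IntervalIntegrable (fun s => k s ^ 2 * B T₂ + s * k s ^ 2 * B' t)
        volume T₂ t :=
      hII _ (((hkc.pow 2).mul continuousOn_const).add (hskcont.mul continuousOn_const))
        T₂ t hT₂0 ht
    have hmono : ∫ x in T₂..t, k x ^ 2 * B x ≤
        ∫ x in T₂..t, (k x ^ 2 * B T₂ + x * k x ^ 2 * B' t) := by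
      apply intervalIntegral.integral_mono_on ht (hII _ hkBcont T₂ t hT₂0 ht) hrhsint
      intro s hs
      have hs0 : (0:ℝ) ≤ s := hT₂0.trans hs.1
      have hBs : B s ≤ B T₂ + (s - T₂) * B' s := by
        have hf := ftcB T₂ s hT₂0 hs.1
        have h4 : ∫ x in T₂..s, B' x ≤ (s - T₂) * B' s := by
          have h5 := intervalIntegral.integral_mono_on hs.1
            (hII B' hB'cont T₂ s hT₂0 hs.1) (_root_.intervalIntegrable_const (c := B' s))
            (fun u hu => hB'mono u s (hT₂0.trans hu.1) hu.2)
          rwa [intervalIntegral.integral_const, smul_eq_mul] at h5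
        linarith
      have h6 : B' s ≤ B' t := hB'mono s t hs0 hs.2
      have h7 : 0 ≤ B' s := hB'nn s hs0
      have h8 : (s - T₂) * B' s ≤ s * B' t := by
        have h8a : (s - T₂) * B' s ≤ (s - T₂) * B' t :=
          mul_le_mul_of_nonneg_left h6 (by linarith [hs.1] : (0:ℝ) ≤ s - T₂)
        have h8b : (s - T₂) * B' t ≤ s * B' t :=
          mul_le_mul_of_nonneg_right (by linarith) hB't
        linarith
      have h9 : B s ≤ B T₂ + s * B' t := by linarith
      calc k s ^ 2 * B s ≤ k s ^ 2 * (B T₂ + s * B' t) :=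
            mul_le_mul_of_nonneg_left h9 (sq_nonneg _)
        _ = k s ^ 2 * B T₂ + s * k s ^ 2 * B' t := by ring
    have hsplit : ∫ x in T₂..t, (k x ^ 2 * B T₂ + x * k x ^ 2 * B' t) =
        (∫ x in T₂..t, k x ^ 2) * B T₂ + (∫ x in T₂..t, x * k x ^ 2) * B' t := by
      rw [intervalIntegral.integral_add
        (hII (fun x => k x ^ 2 * B T₂) ((hkc.pow 2).mul (continuousOn_const (c := B T₂))) T₂ t hT₂0 ht)
        (hII (fun x => x * k x ^ 2 * B' t) (hskcont.mul (continuousOn_const (c := B' t))) T₂ t hT₂0 ht),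
        intervalIntegral.integral_mul_const, intervalIntegral.integral_mul_const]
    have hb1 : (∫ x in T₂..t, k x ^ 2) * B T₂ ≤ I * B T₂ := by
      have := hA t ht
      nlinarith
    have hb2 : (∫ x in T₂..t, x * k x ^ 2) * B' t ≤ (1/2) * B' t := by
      have := htail t ht
      nlinarith
    rw [hsplit] at hmono
    have : B' t - B' T₂ ≤ I * B T₂ + (1/2) * B' t := by linarith
    rw [hM]; linarith
  have hup : ∀ t, T₂ ≤ t → B t ≤ B T₂ + M * (t - T₂) := by
    intro t ht
    have h := ftcB T₂ t hT₂0 ht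
    have h2 : ∫ x in T₂..t, B' x ≤ M * (t - T₂) := by
      have h3 := intervalIntegral.integral_mono_on ht (hII B' hB'cont T₂ t hT₂0 ht)
        (_root_.intervalIntegrable_const (c := M)) (fun u hu => hB'ub u hu.1)
      rwa [intervalIntegral.integral_const, smul_eq_mul, mul_comm] at h3
    linarith
  -- conclusion
  refine ⟨I / 4, B T₂ + M, 2 * T₂, by linarith, by nlinarith [hBone T₂ hT₂0],
    by linarith, ?_⟩
  intro t ht
  have ht1 : (1:ℝ) ≤ t := by linarith
  have htT₁ : T₁ ≤ t := by linarith
  have htT₂ : T₂ ≤ t := by linarith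
  have h2T₁ : 2 * T₁ ≤ t := by linarith
  constructor
  · have := hgrow t htT₁
    nlinarith
  · have := hup t htT₂
    have hBT₂ := hBone T₂ hT₂0
    nlinarith
end

section
/- Let B : [0,∞) → ℝ be C² with B(0) = 1, B'(0) = 0, B'' = k² B, where k is continuous nonnegative with ∫₀^∞ s k(s)² ds < ∞ and ∫₀^∞ k(s)² ds > 0, and suppose t^{-1}∫₀^t B(s) k(s)² s ds → 0 as t → ∞. Then B'(t)/B(t) = 1/t + o(1/t) as t → ∞. -/
open Real MeasureTheory Filter Set intervalIntegral

theorem stmt5 (B B' k : ℝ → ℝ)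
    (hkc : ContinuousOn k (Set.Ici 0))
    (hknn : ∀ t ∈ Set.Ici (0:ℝ), 0 ≤ k t)
    (hB : ∀ t ∈ Set.Ici (0:ℝ), HasDerivWithinAt B (B' t) (Set.Ici 0) t)
    (hB' : ∀ t ∈ Set.Ici (0:ℝ), HasDerivWithinAt B' (k t ^ 2 * B t) (Set.Ici 0) t)
    (hB0 : B 0 = 1) (hB'0 : B' 0 = 0)
    (hint1 : MeasureTheory.IntegrableOn (fun s => s * k s ^ 2) (Set.Ici 0))
    (hint2 : MeasureTheory.IntegrableOn (fun s => k s ^ 2) (Set.Ici 0))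
    (hpos : 0 < ∫ s in Set.Ici (0:ℝ), k s ^ 2)
    (havg : Tendsto (fun t => t⁻¹ * ∫ s in (0:ℝ)..t, B s * k s ^ 2 * s) atTop (nhds 0)) :
    Tendsto (fun t => t * (B' t / B t)) atTop (nhds 1) := by
  -- continuity
  have hBc : ContinuousOn B (Set.Ici 0) := fun t ht => (hB t ht).continuousWithinAt
  have hB'c : ContinuousOn B' (Set.Ici 0) := fun t ht => (hB' t ht).continuousWithinAt
  -- derivatives at interior points
  have hBD : ∀ t, 0 < t → HasDerivAt B (B' t) t := by
    intro t ht
    exact (hB t (le_of_lt ht)).hasDerivAt (Ici_mem_nhds ht)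
  have hB'D : ∀ t, 0 < t → HasDerivAt B' (k t ^ 2 * B t) t := by
    intro t ht
    exact (hB' t (le_of_lt ht)).hasDerivAt (Ici_mem_nhds ht)
  -- positivity of B
  have hBpos : ∀ t, 0 ≤ t → 0 < B t := by
    by_contra hcon
    push_neg at hcon
    obtain ⟨w, hw0, hwB⟩ := hcon
    set A : Set ℝ := Set.Ici 0 ∩ B ⁻¹' (Set.Iic 0) with hA
    have hAne : A.Nonempty := ⟨w, hw0, hwB⟩
    have hAbdd : BddBelow A := ⟨0, fun x hx => hx.1⟩
    have hAclosed : IsClosed A := by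
      exact hBc.preimage_isClosed_of_isClosed isClosed_Ici (isClosed_Iic (a := (0:ℝ)))
    set t₀ : ℝ := sInf A with ht₀
    have ht₀A : t₀ ∈ A := hAclosed.csInf_mem hAne hAbdd
    have ht₀0 : 0 ≤ t₀ := ht₀A.1
    have ht₀B : B t₀ ≤ 0 := ht₀A.2
    have ht₀pos : 0 < t₀ := by
      rcases lt_or_eq_of_le ht₀0 with h | h
      · exact h
      · rw [← h, hB0] at ht₀B; linarith
    have hIoo : ∀ s ∈ Set.Ioo (0:ℝ) t₀, 0 < B s := by
      intro s hs
      by_contra hsB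
      push_neg at hsB
      have : s ∈ A := ⟨hs.1.le, hsB⟩
      have := csInf_le hAbdd this
      exact absurd this (not_le.2 hs.2)
    have hsub : Set.Icc (0:ℝ) t₀ ⊆ Set.Ici 0 := fun x hx => hx.1
    have hB'monoD : MonotoneOn B' (Set.Icc 0 t₀) := by
      apply monotoneOn_of_deriv_nonneg (convex_Icc 0 t₀) (hB'c.mono hsub)
      · intro x hx
        rw [interior_Icc] at hx
        exact ((hB'D x hx.1).differentiableAt).differentiableWithinAt
      · intro x hx
        rw [interior_Icc] at hx
        rw [(hB'D x hx.1).deriv]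
        exact mul_nonneg (sq_nonneg _) (hIoo x hx).le
    have hB'nnD : ∀ x ∈ Set.Icc (0:ℝ) t₀, 0 ≤ B' x := by
      intro x hx
      have := hB'monoD (Set.left_mem_Icc.2 ht₀0) hx hx.1
      · rwa [hB'0] at this
    have hBmonoD : MonotoneOn B (Set.Icc 0 t₀) := by
      apply monotoneOn_of_deriv_nonneg (convex_Icc 0 t₀) (hBc.mono hsub)
      · intro x hx
        rw [interior_Icc] at hx
        exact ((hBD x hx.1).differentiableAt).differentiableWithinAt
      · intro x hx
        rw [interior_Icc] at hx
        rw [(hBD x hx.1).deriv]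
        exact hB'nnD x ⟨hx.1.le, hx.2.le⟩
    have : B 0 ≤ B t₀ :=
      hBmonoD (Set.left_mem_Icc.2 ht₀0) (Set.right_mem_Icc.2 ht₀0) ht₀0
    rw [hB0] at this
    linarith
  -- B' is monotone on Ici 0
  have hB'mono : MonotoneOn B' (Set.Ici 0) := by
    apply monotoneOn_of_deriv_nonneg (convex_Ici 0) hB'c
    · intro x hx
      rw [interior_Ici] at hx
      exact ((hB'D x hx).differentiableAt).differentiableWithinAt
    · intro x hx
      rw [interior_Ici] at hx
      rw [(hB'D x hx).deriv]
      exact mul_nonneg (sq_nonneg _) (hBpos x hx.le).le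
  have hB'nn : ∀ t, 0 ≤ t → 0 ≤ B' t := by
    intro t ht
    have := hB'mono (self_mem_Ici) ht ht
    rwa [hB'0] at this
  have hBmono : MonotoneOn B (Set.Ici 0) := by
    apply monotoneOn_of_deriv_nonneg (convex_Ici 0) hBc
    · intro x hx
      rw [interior_Ici] at hx
      exact ((hBD x hx).differentiableAt).differentiableWithinAt
    · intro x hx
      rw [interior_Ici] at hx
      rw [(hBD x hx).deriv]
      exact hB'nn x hx.le
  have hB1 : ∀ t, 0 ≤ t → 1 ≤ B t := by
    intro t ht
    have := hBmono self_mem_Ici ht ht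
    rwa [hB0] at this
  -- FTC for B'
  have hFTC : ∀ a b : ℝ, 0 ≤ a → a ≤ b →
      (∫ s in a..b, k s ^ 2 * B s) = B' b - B' a := by
    intro a b ha hab
    have hsub : Set.Icc a b ⊆ Set.Ici 0 := fun x hx => le_trans ha hx.1
    have hcont : ContinuousOn (fun s => k s ^ 2 * B s) (Set.Icc a b) :=
      (((hkc.mono hsub).pow 2).mul (hBc.mono hsub))
    apply integral_eq_sub_of_hasDeriv_right_of_le hab (hB'c.mono hsub)
    · intro x hx
      exact (hB'D x (lt_of_le_of_lt ha hx.1)).hasDerivWithinAt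
    · exact hcont.intervalIntegrable_of_Icc hab
  -- comparison helpers
  have hcmp : ∀ T t : ℝ, 0 ≤ T → T ≤ t → ∀ c : ℝ,
      (∀ r, T ≤ r → r ≤ t → B' r ≤ c) → B t ≤ B T + c * (t - T) := by
    intro T t hT hTt c hc
    have hsub : Set.Icc T t ⊆ Set.Ici 0 := fun x hx => le_trans hT hx.1
    have hmono : MonotoneOn (fun r => c * r - B r) (Set.Icc T t) := by
      apply monotoneOn_of_deriv_nonneg (convex_Icc T t)
      · exact ((continuous_const.mul continuous_id).continuousOn).sub (hBc.mono hsub)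
      · intro x hx
        rw [interior_Icc] at hx
        have hx0 : 0 < x := lt_of_le_of_lt hT hx.1
        exact (((hasDerivAt_id x).const_mul c).sub (hBD x hx0)).differentiableAt.differentiableWithinAt
      · intro x hx
        rw [interior_Icc] at hx
        have hx0 : 0 < x := lt_of_le_of_lt hT hx.1
        have hd : HasDerivAt (fun r => c * r - B r) (c - B' x) x := by
          have h := ((hasDerivAt_id x).const_mul c).sub (hBD x hx0)
          simp only [mul_one] at h
          exact h
        rw [hd.deriv]
        have := hc x hx.1.le hx.2.le
        linarith
    have := hmono (Set.left_mem_Icc.2 hTt) (Set.right_mem_Icc.2 hTt) hTt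
    simp only [] at this
    nlinarith [this]
  have hcmp' : ∀ T t : ℝ, 0 ≤ T → T ≤ t → ∀ c : ℝ,
      (∀ r, T ≤ r → r ≤ t → c ≤ B' r) → B T + c * (t - T) ≤ B t := by
    intro T t hT hTt c hc
    have hsub : Set.Icc T t ⊆ Set.Ici 0 := fun x hx => le_trans hT hx.1
    have hmono : MonotoneOn (fun r => B r - c * r) (Set.Icc T t) := by
      apply monotoneOn_of_deriv_nonneg (convex_Icc T t)
      · exact (hBc.mono hsub).sub ((continuous_const.mul continuous_id).continuousOn)
      · intro x hx
        rw [interior_Icc] at hx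
        have hx0 : 0 < x := lt_of_le_of_lt hT hx.1
        exact ((hBD x hx0).sub ((hasDerivAt_id x).const_mul c)).differentiableAt.differentiableWithinAt
      · intro x hx
        rw [interior_Icc] at hx
        have hx0 : 0 < x := lt_of_le_of_lt hT hx.1
        have hd : HasDerivAt (fun r => B r - c * r) (B' x - c) x := by
          have h := (hBD x hx0).sub ((hasDerivAt_id x).const_mul c)
          simp only [mul_one] at h
          exact h
        rw [hd.deriv]
        have := hc x hx.1.le hx.2.le
        linarith
    have := hmono (Set.left_mem_Icc.2 hTt) (Set.right_mem_Icc.2 hTt) hTt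
    simp only [] at this
    nlinarith [this]
  -- B' is bounded above
  have hbdd : ∃ M : ℝ, ∀ t, 0 ≤ t → B' t ≤ M := by
    set I1 : ℝ := ∫ s in Set.Ioi (0:ℝ), s * k s ^ 2 with hI1
    set C2 : ℝ := ∫ s in Set.Ioi (0:ℝ), k s ^ 2 with hC2
    have hI1i : IntegrableOn (fun s => s * k s ^ 2) (Set.Ioi 0) :=
      hint1.mono_set Set.Ioi_subset_Ici_self
    have hC2i : IntegrableOn (fun s => k s ^ 2) (Set.Ioi 0) :=
      hint2.mono_set Set.Ioi_subset_Ici_self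
    have htd : Tendsto (fun t => ∫ s in (0:ℝ)..t, s * k s ^ 2) atTop (nhds I1) :=
      intervalIntegral_tendsto_integral_Ioi 0 hI1i tendsto_id
    obtain ⟨T₀, hT₀⟩ := (Metric.tendsto_atTop.1 htd) (1/2) (by norm_num)
    set T := max T₀ 1 with hTdef
    have hT1 : (1:ℝ) ≤ T := le_max_right _ _
    have hT0 : (0:ℝ) ≤ T := by linarith
    have hnear : |(∫ s in (0:ℝ)..T, s * k s ^ 2) - I1| < 1/2 := by
      have := hT₀ T (le_max_left _ _)
      rwa [Real.dist_eq] at this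
    have hii1 : ∀ a b : ℝ, 0 ≤ a → a ≤ b →
        IntervalIntegrable (fun s => s * k s ^ 2) volume a b := by
      intro a b ha hab
      have hsub : Set.Icc a b ⊆ Set.Ici 0 := fun x hx => le_trans ha hx.1
      exact (continuous_id.continuousOn.mul ((hkc.mono hsub).pow 2)).intervalIntegrable_of_Icc hab
    have hii2 : ∀ a b : ℝ, 0 ≤ a → a ≤ b →
        IntervalIntegrable (fun s => k s ^ 2) volume a b := by
      intro a b ha hab
      have hsub : Set.Icc a b ⊆ Set.Ici 0 := fun x hx => le_trans ha hx.1
      exact ((hkc.mono hsub).pow 2).intervalIntegrable_of_Icc hab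
    have hmono0 : ∀ t : ℝ, 0 ≤ t → (∫ s in (0:ℝ)..t, s * k s ^ 2) ≤ I1 := by
      intro t ht
      rw [intervalIntegral.integral_of_le ht]
      apply setIntegral_mono_set hI1i
      · filter_upwards [ae_restrict_mem measurableSet_Ioi] with s hs
        exact mul_nonneg (le_of_lt hs) (sq_nonneg _)
      · exact Set.Ioc_subset_Ioi_self.eventuallyLE
    have htail : ∀ t : ℝ, T ≤ t → (∫ s in T..t, s * k s ^ 2) ≤ 1/2 := by
      intro t ht
      have hsplit : (∫ s in (0:ℝ)..t, s * k s ^ 2) - (∫ s in (0:ℝ)..T, s * k s ^ 2)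
          = ∫ s in T..t, s * k s ^ 2 :=
        intervalIntegral.integral_interval_sub_left (hii1 0 t le_rfl (le_trans hT0 ht))
          (hii1 0 T le_rfl hT0)
      have h1 := hmono0 t (le_trans hT0 ht)
      have h2 : I1 - 1/2 < ∫ s in (0:ℝ)..T, s * k s ^ 2 := by
        have := abs_lt.1 hnear
        linarith [this.1]
      linarith [hsplit]
    have hk2bnd : ∀ t : ℝ, T ≤ t → (∫ s in T..t, k s ^ 2) ≤ C2 := by
      intro t ht
      rw [intervalIntegral.integral_of_le ht]
      apply setIntegral_mono_set hC2i
      · filter_upwards with s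
        exact sq_nonneg _
      · have : Set.Ioc T t ⊆ Set.Ioi 0 := fun x hx =>
          lt_of_lt_of_le (lt_of_lt_of_le zero_lt_one hT1) hx.1.le
        exact this.eventuallyLE
    have hC2nn : 0 ≤ C2 := setIntegral_nonneg measurableSet_Ioi (fun s _ => sq_nonneg _)
    refine ⟨2 * (B' T + B T * C2), ?_⟩
    intro t ht
    rcases le_total t T with h | h
    · have h1 : B' t ≤ B' T := hB'mono ht hT0 h
      nlinarith [hB'nn T hT0, hBpos T hT0, hC2nn]
    · have hsub : Set.Icc T t ⊆ Set.Ici 0 := fun x hx => le_trans hT0 hx.1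
      have key : B' t - B' T ≤ B T * C2 + B' t * (1/2) := by
        rw [← hFTC T t hT0 h]
        have step1 : (∫ s in T..t, k s ^ 2 * B s)
            ≤ ∫ s in T..t, (B T * k s ^ 2 + B' t * (s * k s ^ 2)) := by
          apply intervalIntegral.integral_mono_on h
          · exact (((hkc.mono hsub).pow 2).mul (hBc.mono hsub)).intervalIntegrable_of_Icc h
          · exact ((hii2 T t hT0 h).const_mul (B T)).add ((hii1 T t hT0 h).const_mul (B' t))
          · intro s hs
            have hBs : B s ≤ B T + B' t * s := by
              have h2 : B s ≤ B T + B' t * (s - T) := by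
                apply hcmp T s hT0 hs.1 (B' t)
                intro r hr hrs
                exact hB'mono (le_trans hT0 hr) ht (le_trans hrs hs.2)
              nlinarith [hB'nn t ht, hT0]
            calc k s ^ 2 * B s ≤ k s ^ 2 * (B T + B' t * s) :=
                  mul_le_mul_of_nonneg_left hBs (sq_nonneg _)
              _ = B T * k s ^ 2 + B' t * (s * k s ^ 2) := by ring
        have step2 : (∫ s in T..t, (B T * k s ^ 2 + B' t * (s * k s ^ 2)))
            = B T * (∫ s in T..t, k s ^ 2) + B' t * (∫ s in T..t, s * k s ^ 2) := by
          rw [intervalIntegral.integral_add ((hii2 T t hT0 h).const_mul (B T))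
            ((hii1 T t hT0 h).const_mul (B' t)), intervalIntegral.integral_const_mul,
            intervalIntegral.integral_const_mul]
        have h3 := hk2bnd t h
        have h4 := htail t h
        have h5 : 0 < B T := hBpos T hT0
        have h6 : 0 ≤ B' t := hB'nn t ht
        nlinarith [step1, step2]
      linarith
  -- the limit L of B'
  obtain ⟨M, hM⟩ := hbdd
  set S : Set ℝ := B' '' Set.Ici 0 with hS
  have hSne : S.Nonempty := ⟨B' 0, mem_image_of_mem _ self_mem_Ici⟩
  have hSbdd : BddAbove S := by
    refine ⟨M, ?_⟩
    rintro y ⟨t, ht, rfl⟩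
    exact hM t ht
  set L : ℝ := sSup S with hL
  have hB'leL : ∀ t, 0 ≤ t → B' t ≤ L := by
    intro t ht
    exact le_csSup hSbdd (mem_image_of_mem _ ht)
  have hB'tendsto : Tendsto B' atTop (nhds L) := by
    rw [Metric.tendsto_atTop]
    intro ε hε
    obtain ⟨y, hy, hy2⟩ := exists_lt_of_lt_csSup hSne (by linarith : L - ε < L)
    obtain ⟨T, hT, rfl⟩ := hy
    refine ⟨max T 1, fun t ht => ?_⟩
    have ht1 : (1:ℝ) ≤ t := le_trans (le_max_right _ _) ht
    have htT : T ≤ t := le_trans (le_max_left _ _) ht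
    have h0t : (0:ℝ) ≤ t := by linarith
    have h1 : B' T ≤ B' t := hB'mono hT h0t htT
    have h2 : B' t ≤ L := hB'leL t h0t
    rw [Real.dist_eq, abs_lt]
    constructor <;> linarith
  -- L is positive
  have hLpos : 0 < L := by
    have hIoi : IntegrableOn (fun s => k s ^ 2) (Set.Ioi 0) :=
      hint2.mono_set Set.Ioi_subset_Ici_self
    have htend : Tendsto (fun t => ∫ s in (0:ℝ)..t, k s ^ 2) atTop
        (nhds (∫ s in Set.Ioi (0:ℝ), k s ^ 2)) :=
      intervalIntegral_tendsto_integral_Ioi 0 hIoi tendsto_id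
    have hle : ∀ t : ℝ, 0 ≤ t → (∫ s in (0:ℝ)..t, k s ^ 2) ≤ L := by
      intro t ht
      have hsub : Set.Icc (0:ℝ) t ⊆ Set.Ici 0 := fun x hx => hx.1
      have h1 : (∫ s in (0:ℝ)..t, k s ^ 2) ≤ ∫ s in (0:ℝ)..t, k s ^ 2 * B s := by
        apply intervalIntegral.integral_mono_on ht
        · exact ((hkc.mono hsub).pow 2).intervalIntegrable_of_Icc ht
        · exact (((hkc.mono hsub).pow 2).mul (hBc.mono hsub)).intervalIntegrable_of_Icc ht
        · intro s hs
          nlinarith [sq_nonneg (k s), hB1 s hs.1]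
      have h2 := hFTC 0 t le_rfl ht
      rw [hB'0] at h2
      have h3 := hB'leL t ht
      linarith
    have h4 : (∫ s in Set.Ioi (0:ℝ), k s ^ 2) ≤ L :=
      le_of_tendsto htend (Filter.eventually_atTop.2 ⟨0, fun t ht => hle t ht⟩)
    have h5 : (0:ℝ) < ∫ s in Set.Ioi (0:ℝ), k s ^ 2 := by
      rwa [MeasureTheory.integral_Ici_eq_integral_Ioi] at hpos
    linarith
  -- upper bound for B
  have hupper : ∀ t, 0 ≤ t → B t ≤ 1 + L * t := by
    intro t ht
    have := hcmp 0 t le_rfl ht L (fun r hr _ => hB'leL r hr)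
    rw [hB0] at this
    linarith
  -- lower bound for B
  have hlower : ∀ T, 0 ≤ T → ∀ t, T ≤ t → B T + B' T * (t - T) ≤ B t := by
    intro T hT t hTt
    exact hcmp' T t hT hTt (B' T) (fun r hr _ => hB'mono hT (le_trans hT hr) hr)
  -- B t / t tends to L
  have hBoverT : Tendsto (fun t => B t / t) atTop (nhds L) := by
    rw [Metric.tendsto_atTop]
    intro ε hε
    obtain ⟨y, hy, hy2⟩ := exists_lt_of_lt_csSup hSne (show L - ε/2 < L by linarith)
    obtain ⟨T₁, hT₁, rfl⟩ := hy
    have hT₁0 : (0:ℝ) ≤ T₁ := hT₁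
    set c : ℝ := B T₁ - B' T₁ * T₁ with hc
    refine ⟨max (max 1 T₁) (2*(|c|+1)/ε), fun t ht => ?_⟩
    have ht1 : (1:ℝ) ≤ t := le_trans (le_trans (le_max_left _ _) (le_max_left _ _)) ht
    have htT : T₁ ≤ t := le_trans (le_trans (le_max_right _ _) (le_max_left _ _)) ht
    have htc : 2*(|c|+1)/ε ≤ t := le_trans (le_max_right _ _) ht
    have ht0 : (0:ℝ) < t := by linarith
    have htc2 : 2*(|c|+1) ≤ t * ε := (div_le_iff₀ hε).1 htc
    have habs : |c| / t ≤ ε/2 := by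
      rw [div_le_iff₀ ht0]
      nlinarith [abs_nonneg c]
    have hup : B t / t ≤ L + ε/2 := by
      have h1 : B t ≤ 1 + L * t := hupper t ht0.le
      rw [div_le_iff₀ ht0]
      nlinarith [abs_nonneg c]
    have h1 : c + B' T₁ * t ≤ B t := by
      have h0 := hlower T₁ hT₁0 t htT
      have : B T₁ + B' T₁ * (t - T₁) = c + B' T₁ * t := by rw [hc]; ring
      linarith
    have h2 : (c + B' T₁ * t)/t ≤ B t / t := by
      gcongr
    have h3 : (c + B' T₁ * t)/t = c/t + B' T₁ := by field_simp
    have h4 : -(ε/2) ≤ c/t := by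
      have h6 : -(|c|/t) ≤ c/t := by
        rw [← neg_div]
        gcongr
        exact neg_abs_le c
      linarith
    have hlow : L - ε < B t / t := by
      rw [h3] at h2
      linarith
    rw [Real.dist_eq, abs_lt]
    constructor <;> linarith
  -- conclusion
  have heq : ∀ t : ℝ, 1 ≤ t → t * (B' t / B t) = B' t / (B t / t) := by
    intro t ht
    have h0t : (0:ℝ) ≤ t := by linarith
    have hBt : B t ≠ 0 := ne_of_gt (hBpos t h0t)
    have htne : t ≠ 0 := by linarith
    field_simp
  have hmain : Tendsto (fun t => B' t / (B t / t)) atTop (nhds (L / L)) :=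
    hB'tendsto.div hBoverT (ne_of_gt hLpos)
  rw [div_self (ne_of_gt hLpos)] at hmain
  refine hmain.congr' ?_
  filter_upwards [eventually_ge_atTop (1:ℝ)] with t ht
  exact (heq t ht).symm
end

section
/- Let a₁₂, a₂₁, a₁₁, a₂₂, R₁, R₂ : [t₀, t₁] → ℝ be continuous with a₁₂ ≤ 0, a₂₁ ≤ 0, R₁ < 0, R₂ > 0 on (t₀, t₁], and let u, v : [t₀, t₁] → ℝ be C¹ solutions of u' = a₁₁u + a₁₂v + R₁ and v' = a₂₁u + a₂₂v + R₂ with u(t₀) ≤ 0 and v(t₀) ≥ 0. Then u(t) < 0 and v(t) > 0 for all t ∈ (t₀, t₁]. -/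
open Real Set Filter Topology

private lemma aux_slope {w : ℝ → ℝ} {d x b : ℝ} {s : Set ℝ} (hw : HasDerivWithinAt w d s x)
    (hwx : ContinuousWithinAt w s x) (hsub : Set.Ioc x b ⊆ s) {δ : ℝ} (hδ : 0 < δ) :
    ∀ᶠ z in 𝓝[Set.Ioc x b] x,
      (z - x)⁻¹ * (max (w z) 0 - max (w x) 0) < (if w x < 0 then 0 else max d 0) + δ := by
  have hl1 : 𝓝[Set.Ioc x b] x ≤ 𝓝[s] x := nhdsWithin_mono _ hsub
  by_cases hwx0 : w x < 0
  · rw [if_pos hwx0]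
    have hev : ∀ᶠ z in 𝓝[Set.Ioc x b] x, w z < 0 :=
      (hwx.tendsto.eventually_lt_const hwx0).filter_mono hl1
    filter_upwards [hev] with z hz
    rw [max_eq_right hz.le, max_eq_right hwx0.le]
    simpa using hδ
  · push_neg at hwx0
    rw [if_neg (not_lt.2 hwx0)]
    have hs : Tendsto (slope w x) (𝓝[s \ {x}] x) (𝓝 d) :=
      hasDerivWithinAt_iff_tendsto_slope.1 hw
    have hl2 : 𝓝[Set.Ioc x b] x ≤ 𝓝[s \ {x}] x :=
      nhdsWithin_mono _ (fun z hz => ⟨hsub hz, by simpa using (ne_of_gt hz.1)⟩)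
    have hmax : Tendsto (fun z => max (slope w x z) 0) (𝓝[Set.Ioc x b] x) (𝓝 (max d 0)) :=
      (hs.mono_left hl2).max tendsto_const_nhds
    have h1 : ∀ᶠ z in 𝓝[Set.Ioc x b] x, max (slope w x z) 0 < max d 0 + δ :=
      hmax.eventually_lt_const (lt_add_of_pos_right _ hδ)
    filter_upwards [h1, eventually_mem_nhdsWithin] with z h1z hzmem
    have hzx : (0:ℝ) < z - x := sub_pos.2 hzmem.1
    have h2 : max (w z) 0 - max (w x) 0 ≤ max (w z - w x) 0 := by
      rw [max_eq_left hwx0, ← max_sub_sub_right]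
      exact max_le_max le_rfl (by linarith)
    calc (z - x)⁻¹ * (max (w z) 0 - max (w x) 0)
        ≤ (z - x)⁻¹ * max (w z - w x) 0 :=
          mul_le_mul_of_nonneg_left h2 (inv_nonneg.2 hzx.le)
      _ = max ((z - x)⁻¹ * (w z - w x)) 0 := by
          rw [mul_max_of_nonneg _ _ (inv_nonneg.2 hzx.le), mul_zero]
      _ = max (slope w x z) 0 := by rw [slope_def_field, div_eq_inv_mul]
      _ < max d 0 + δ := h1z

theorem stmt10 (t₀ t₁ : ℝ) (ht : t₀ ≤ t₁)
    (a₁₁ a₁₂ a₂₁ a₂₂ R₁ R₂ u v u' v' : ℝ → ℝ)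
    (hc : ∀ f ∈ [a₁₁, a₁₂, a₂₁, a₂₂, R₁, R₂], ContinuousOn f (Set.Icc t₀ t₁))
    (ha12 : ∀ t ∈ Set.Icc t₀ t₁, a₁₂ t ≤ 0)
    (ha21 : ∀ t ∈ Set.Icc t₀ t₁, a₂₁ t ≤ 0)
    (hR1 : ∀ t ∈ Set.Ioc t₀ t₁, R₁ t < 0)
    (hR2 : ∀ t ∈ Set.Ioc t₀ t₁, R₂ t > 0)
    (hu : ∀ t ∈ Set.Icc t₀ t₁, HasDerivWithinAt u (a₁₁ t * u t + a₁₂ t * v t + R₁ t) (Set.Icc t₀ t₁) t)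
    (hv : ∀ t ∈ Set.Icc t₀ t₁, HasDerivWithinAt v (a₂₁ t * u t + a₂₂ t * v t + R₂ t) (Set.Icc t₀ t₁) t)
    (hu0 : u t₀ ≤ 0) (hv0 : v t₀ ≥ 0) :
    ∀ t ∈ Set.Ioc t₀ t₁, u t < 0 ∧ v t > 0 := by
  intro t htmem
  obtain ⟨ht0t, htt1⟩ := htmem
  have hlt : t₀ < t₁ := lt_of_lt_of_le ht0t htt1
  have hca11 : ContinuousOn a₁₁ (Set.Icc t₀ t₁) := hc a₁₁ (by simp)
  have hca12 : ContinuousOn a₁₂ (Set.Icc t₀ t₁) := hc a₁₂ (by simp)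
  have hca21 : ContinuousOn a₂₁ (Set.Icc t₀ t₁) := hc a₂₁ (by simp)
  have hca22 : ContinuousOn a₂₂ (Set.Icc t₀ t₁) := hc a₂₂ (by simp)
  have hcR1 : ContinuousOn R₁ (Set.Icc t₀ t₁) := hc R₁ (by simp)
  have hcR2 : ContinuousOn R₂ (Set.Icc t₀ t₁) := hc R₂ (by simp)
  have hcu : ContinuousOn u (Set.Icc t₀ t₁) := fun x hx => (hu x hx).continuousWithinAt
  have hcv : ContinuousOn v (Set.Icc t₀ t₁) := fun x hx => (hv x hx).continuousWithinAt
  -- a uniform bound K on the coefficients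
  obtain ⟨K₁, hK₁⟩ := isCompact_Icc.exists_bound_of_continuousOn hca11
  obtain ⟨K₂, hK₂⟩ := isCompact_Icc.exists_bound_of_continuousOn hca12
  obtain ⟨K₃, hK₃⟩ := isCompact_Icc.exists_bound_of_continuousOn hca21
  obtain ⟨K₄, hK₄⟩ := isCompact_Icc.exists_bound_of_continuousOn hca22
  set K : ℝ := |K₁| + |K₂| + |K₃| + |K₄| with hKdef
  have hK0 : 0 ≤ K := by positivity
  have hK11 : ∀ x ∈ Set.Icc t₀ t₁, |a₁₁ x| ≤ K := by
    intro x hx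
    have := hK₁ x hx
    rw [Real.norm_eq_abs] at this
    have h1 := abs_nonneg K₂; have h2 := abs_nonneg K₃; have h3 := abs_nonneg K₄
    have := le_abs_self K₁
    simp only [hKdef]; linarith
  have hK12 : ∀ x ∈ Set.Icc t₀ t₁, |a₁₂ x| ≤ K := by
    intro x hx
    have := hK₂ x hx
    rw [Real.norm_eq_abs] at this
    have h1 := abs_nonneg K₁; have h2 := abs_nonneg K₃; have h3 := abs_nonneg K₄
    have := le_abs_self K₂
    simp only [hKdef]; linarith
  have hK21 : ∀ x ∈ Set.Icc t₀ t₁, |a₂₁ x| ≤ K := by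
    intro x hx
    have := hK₃ x hx
    rw [Real.norm_eq_abs] at this
    have h1 := abs_nonneg K₁; have h2 := abs_nonneg K₂; have h3 := abs_nonneg K₄
    have := le_abs_self K₃
    simp only [hKdef]; linarith
  have hK22 : ∀ x ∈ Set.Icc t₀ t₁, |a₂₂ x| ≤ K := by
    intro x hx
    have := hK₄ x hx
    rw [Real.norm_eq_abs] at this
    have h1 := abs_nonneg K₁; have h2 := abs_nonneg K₂; have h3 := abs_nonneg K₃
    have := le_abs_self K₄
    simp only [hKdef]; linarith
  -- boundary signs of the sources on the half-open interval
  have hR1' : ∀ x ∈ Set.Ico t₀ t₁, R₁ x ≤ 0 := by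
    intro x hx
    rcases eq_or_lt_of_le hx.1 with h | h
    · subst h
      haveI : (𝓝[Set.Ioc t₀ t₁] t₀).NeBot := by
        rw [← mem_closure_iff_nhdsWithin_neBot, closure_Ioc hlt.ne]
        exact ⟨le_refl t₀, hlt.le⟩
      have h1 : Tendsto R₁ (𝓝[Set.Ioc t₀ t₁] t₀) (𝓝 (R₁ t₀)) :=
        (hcR1 t₀ (left_mem_Icc.2 hlt.le)).tendsto.mono_left
          (nhdsWithin_mono _ Set.Ioc_subset_Icc_self)
      exact le_of_tendsto h1 (eventually_mem_nhdsWithin.mono fun z hz => (hR1 z hz).le)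
    · exact (hR1 x ⟨h, hx.2.le⟩).le
  have hR2' : ∀ x ∈ Set.Ico t₀ t₁, 0 ≤ R₂ x := by
    intro x hx
    rcases eq_or_lt_of_le hx.1 with h | h
    · subst h
      haveI : (𝓝[Set.Ioc t₀ t₁] t₀).NeBot := by
        rw [← mem_closure_iff_nhdsWithin_neBot, closure_Ioc hlt.ne]
        exact ⟨le_refl t₀, hlt.le⟩
      have h1 : Tendsto R₂ (𝓝[Set.Ioc t₀ t₁] t₀) (𝓝 (R₂ t₀)) :=
        (hcR2 t₀ (left_mem_Icc.2 hlt.le)).tendsto.mono_left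
          (nhdsWithin_mono _ Set.Ioc_subset_Icc_self)
      exact ge_of_tendsto h1 (eventually_mem_nhdsWithin.mono fun z hz => (hR2 z hz).le)
    · exact (hR2 x ⟨h, hx.2.le⟩).le
  -- Step 1: weak signs on all of [t₀, t₁], via a Grönwall estimate on max(u,0)+max(-v,0)
  have step1 : ∀ x ∈ Set.Icc t₀ t₁, u x ≤ 0 ∧ 0 ≤ v x := by
    have hcont : ContinuousOn (fun y => max (u y) 0 + max (-v y) 0) (Set.Icc t₀ t₁) :=
      (hcu.sup continuousOn_const).add (hcv.neg.sup continuousOn_const)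
    have hslope : ∀ x ∈ Set.Ico t₀ t₁, ∀ r,
        ((if u x < 0 then (0:ℝ) else max (a₁₁ x * u x + a₁₂ x * v x + R₁ x) 0)
          + (if -v x < 0 then (0:ℝ) else max (-(a₂₁ x * u x + a₂₂ x * v x + R₂ x)) 0)) < r →
        ∃ᶠ z in 𝓝[>] x, (z - x)⁻¹ * ((max (u z) 0 + max (-v z) 0) - (max (u x) 0 + max (-v x) 0)) < r := by
      intro x hx r hr
      have hxI : x ∈ Set.Icc t₀ t₁ := ⟨hx.1, hx.2.le⟩
      haveI : (𝓝[Set.Ioc x t₁] x).NeBot := by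
        rw [← mem_closure_iff_nhdsWithin_neBot, closure_Ioc hx.2.ne]
        exact ⟨le_refl x, hx.2.le⟩
      set δ : ℝ := (r - ((if u x < 0 then (0:ℝ) else max (a₁₁ x * u x + a₁₂ x * v x + R₁ x) 0)
          + (if -v x < 0 then (0:ℝ) else max (-(a₂₁ x * u x + a₂₂ x * v x + R₂ x)) 0))) / 2 with hδdef
      have hδ : 0 < δ := by rw [hδdef]; linarith
      have hsub : Set.Ioc x t₁ ⊆ Set.Icc t₀ t₁ := fun z hz => ⟨hx.1.trans hz.1.le, hz.2⟩
      have h1 := aux_slope (hu x hxI) (hcu x hxI) hsub hδ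
      have h2 := aux_slope ((hv x hxI).neg) ((hcv x hxI).neg) hsub hδ
      have hcomb : ∀ᶠ z in 𝓝[Set.Ioc x t₁] x,
          (z - x)⁻¹ * ((max (u z) 0 + max (-v z) 0) - (max (u x) 0 + max (-v x) 0)) < r := by
        filter_upwards [h1, h2] with z h1z h2z
        have hsplit : (z - x)⁻¹ * ((max (u z) 0 + max (-v z) 0) - (max (u x) 0 + max (-v x) 0))
            = (z - x)⁻¹ * (max (u z) 0 - max (u x) 0) + (z - x)⁻¹ * (max (-v z) 0 - max (-v x) 0) := by
          ring
        rw [hsplit]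
        have := add_lt_add h1z h2z
        rw [hδdef] at this
        simp only [Pi.neg_apply] at this
        linarith
      exact (hcomb.frequently).filter_mono (nhdsWithin_mono _ (fun z hz => hz.1))
    have hinit : max (u t₀) 0 + max (-v t₀) 0 ≤ 0 := by
      rw [max_eq_right hu0, max_eq_right (neg_nonpos.2 hv0)]; norm_num
    have hbound : ∀ x ∈ Set.Ico t₀ t₁,
        ((if u x < 0 then (0:ℝ) else max (a₁₁ x * u x + a₁₂ x * v x + R₁ x) 0)
          + (if -v x < 0 then (0:ℝ) else max (-(a₂₁ x * u x + a₂₂ x * v x + R₂ x)) 0))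
        ≤ (2 * K) * (max (u x) 0 + max (-v x) 0) + 0 := by
      intro x hx
      have hxI : x ∈ Set.Icc t₀ t₁ := ⟨hx.1, hx.2.le⟩
      have hPn : (0:ℝ) ≤ max (u x) 0 := le_max_right _ _
      have hQn : (0:ℝ) ≤ max (-v x) 0 := le_max_right _ _
      have hNn : (0:ℝ) ≤ max (u x) 0 + max (-v x) 0 := add_nonneg hPn hQn
      have hA : (if u x < 0 then (0:ℝ) else max (a₁₁ x * u x + a₁₂ x * v x + R₁ x) 0)
          ≤ K * (max (u x) 0 + max (-v x) 0) := by
        split_ifs with h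
        · exact mul_nonneg hK0 hNn
        · push_neg at h
          refine max_le ?_ (mul_nonneg hK0 hNn)
          have h1 : a₁₁ x * u x ≤ K * max (u x) 0 := by
            have h11 : a₁₁ x ≤ K := le_trans (le_abs_self _) (hK11 x hxI)
            calc a₁₁ x * u x ≤ K * u x := mul_le_mul_of_nonneg_right h11 h
              _ = K * max (u x) 0 := by rw [max_eq_left h]
          have h2 : a₁₂ x * v x ≤ K * max (-v x) 0 := by
            have hq : -(max (-v x) 0) ≤ v x := by linarith [le_max_left (-v x) 0]
            have hstep : a₁₂ x * v x ≤ a₁₂ x * (-(max (-v x) 0)) :=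
              mul_le_mul_of_nonpos_left hq (ha12 x hxI)
            have hK' : -a₁₂ x ≤ K := le_trans (neg_le_abs _) (hK12 x hxI)
            nlinarith
          have h3 : R₁ x ≤ 0 := hR1' x hx
          nlinarith
      have hB : (if -v x < 0 then (0:ℝ) else max (-(a₂₁ x * u x + a₂₂ x * v x + R₂ x)) 0)
          ≤ K * (max (u x) 0 + max (-v x) 0) := by
        split_ifs with h
        · exact mul_nonneg hK0 hNn
        · push_neg at h
          refine max_le ?_ (mul_nonneg hK0 hNn)
          have h1 : -(a₂₁ x * u x) ≤ K * max (u x) 0 := by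
            have ha := ha21 x hxI
            have hKa : -a₂₁ x ≤ K := le_trans (neg_le_abs _) (hK21 x hxI)
            have hP1 : u x ≤ max (u x) 0 := le_max_left _ _
            nlinarith
          have h2 : -(a₂₂ x * v x) ≤ K * max (-v x) 0 := by
            have hQx : max (-v x) 0 = -v x := max_eq_left h
            have h22 : a₂₂ x ≤ K := le_trans (le_abs_self _) (hK22 x hxI)
            rw [hQx]
            nlinarith
          have h3 : 0 ≤ R₂ x := hR2' x hx
          nlinarith
      linarith
    have main := le_gronwallBound_of_liminf_deriv_right_le hcont hslope hinit hbound
    intro x hxI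
    have hx := main x hxI
    rw [gronwallBound_ε0_δ0] at hx
    constructor
    · linarith [le_max_left (u x) 0, le_max_right (-v x) 0]
    · linarith [le_max_left (-v x) 0, le_max_right (u x) 0]
  -- Step 2: strict signs at t via the integrating factor exp (K x)
  have hIoosub : Set.Ioo t₀ t ⊆ Set.Icc t₀ t₁ := fun x hx => ⟨hx.1.le, hx.2.le.trans htt1⟩
  have hIccsub : Set.Icc t₀ t ⊆ Set.Icc t₀ t₁ := fun x hx => ⟨hx.1, hx.2.trans htt1⟩
  have hexp : ∀ x : ℝ, HasDerivAt (fun y => Real.exp (K * y)) (Real.exp (K * x) * K) x := by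
    intro x
    simpa using ((hasDerivAt_id x).const_mul K).exp
  constructor
  · -- u t < 0
    have hanti : StrictAntiOn (fun y => Real.exp (K * y) * u y) (Set.Icc t₀ t) := by
      apply strictAntiOn_of_deriv_neg (convex_Icc _ _)
      · exact ((Real.continuous_exp.comp (continuous_const.mul continuous_id)).continuousOn).mul
          (hcu.mono hIccsub)
      · intro x hx
        rw [interior_Icc] at hx
        have hxI : x ∈ Set.Icc t₀ t₁ := hIoosub hx
        have hmem : Set.Icc t₀ t₁ ∈ 𝓝 x := Icc_mem_nhds hx.1 (hx.2.trans_le htt1)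
        have hux : HasDerivAt u (a₁₁ x * u x + a₁₂ x * v x + R₁ x) x :=
          (hu x hxI).hasDerivAt hmem
        have hd : HasDerivAt (fun y => Real.exp (K * y) * u y)
            (Real.exp (K * x) * K * u x + Real.exp (K * x) * (a₁₁ x * u x + a₁₂ x * v x + R₁ x)) x :=
          (hexp x).mul hux
        rw [hd.deriv]
        have h1 : (K + a₁₁ x) * u x ≤ 0 :=
          mul_nonpos_of_nonneg_of_nonpos (by linarith [neg_abs_le (a₁₁ x), hK11 x hxI])
            (step1 x hxI).1
        have h2 : a₁₂ x * v x ≤ 0 :=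
          mul_nonpos_of_nonpos_of_nonneg (ha12 x hxI) (step1 x hxI).2
        have h3 : R₁ x < 0 := hR1 x ⟨hx.1, hx.2.le.trans htt1⟩
        have hsum : K * u x + (a₁₁ x * u x + a₁₂ x * v x + R₁ x) < 0 := by nlinarith
        have hfac : Real.exp (K * x) * K * u x
            + Real.exp (K * x) * (a₁₁ x * u x + a₁₂ x * v x + R₁ x)
            = Real.exp (K * x) * (K * u x + (a₁₁ x * u x + a₁₂ x * v x + R₁ x)) := by ring
        rw [hfac]
        exact mul_neg_of_pos_of_neg (Real.exp_pos _) hsum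
    have hg : Real.exp (K * t) * u t < Real.exp (K * t₀) * u t₀ :=
      hanti ⟨le_refl _, ht0t.le⟩ ⟨ht0t.le, le_refl _⟩ ht0t
    have hg0 : Real.exp (K * t₀) * u t₀ ≤ 0 :=
      mul_nonpos_of_nonneg_of_nonpos (Real.exp_pos _).le hu0
    nlinarith [Real.exp_pos (K * t)]
  · -- v t > 0
    have hanti : StrictAntiOn (fun y => Real.exp (K * y) * (-v y)) (Set.Icc t₀ t) := by
      apply strictAntiOn_of_deriv_neg (convex_Icc _ _)
      · exact ((Real.continuous_exp.comp (continuous_const.mul continuous_id)).continuousOn).mul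
          ((hcv.mono hIccsub).neg)
      · intro x hx
        rw [interior_Icc] at hx
        have hxI : x ∈ Set.Icc t₀ t₁ := hIoosub hx
        have hmem : Set.Icc t₀ t₁ ∈ 𝓝 x := Icc_mem_nhds hx.1 (hx.2.trans_le htt1)
        have hvx : HasDerivAt (fun y => -v y) (-(a₂₁ x * u x + a₂₂ x * v x + R₂ x)) x :=
          ((hv x hxI).hasDerivAt hmem).neg
        have hd : HasDerivAt (fun y => Real.exp (K * y) * (-v y))
            (Real.exp (K * x) * K * (-v x)
              + Real.exp (K * x) * (-(a₂₁ x * u x + a₂₂ x * v x + R₂ x))) x :=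
          (hexp x).mul hvx
        rw [hd.deriv]
        have h1 : 0 ≤ (K + a₂₂ x) * v x :=
          mul_nonneg (by linarith [neg_abs_le (a₂₂ x), hK22 x hxI]) (step1 x hxI).2
        have h2 : 0 ≤ a₂₁ x * u x := by nlinarith [ha21 x hxI, (step1 x hxI).1]
        have h3 : 0 < R₂ x := hR2 x ⟨hx.1, hx.2.le.trans htt1⟩
        have hsum : K * (-v x) + (-(a₂₁ x * u x + a₂₂ x * v x + R₂ x)) < 0 := by nlinarith
        have hfac : Real.exp (K * x) * K * (-v x)
            + Real.exp (K * x) * (-(a₂₁ x * u x + a₂₂ x * v x + R₂ x))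
            = Real.exp (K * x) * (K * (-v x) + (-(a₂₁ x * u x + a₂₂ x * v x + R₂ x))) := by ring
        rw [hfac]
        exact mul_neg_of_pos_of_neg (Real.exp_pos _) hsum
    have hg : Real.exp (K * t) * (-v t) < Real.exp (K * t₀) * (-v t₀) :=
      hanti ⟨le_refl _, ht0t.le⟩ ⟨ht0t.le, le_refl _⟩ ht0t
    have hg0 : Real.exp (K * t₀) * (-v t₀) ≤ 0 :=
      mul_nonpos_of_nonneg_of_nonpos (Real.exp_pos _).le (by linarith)
    nlinarith [Real.exp_pos (K * t)]
end
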